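/- Suppose the probability measure P satisfies (1/2, b)-multiplicative expansion on X for some b > 1. Then for every choice of ρ > 0, P satisfies (ρ/(b−1), ρ)-constant expansion. -/
import Mathlib


open MeasureTheory Set

/-- `P` satisfies `(1/2, b)`-multiplicative expansion w.r.t. the class partition `Q` and the
neighborhood operation `Nbhd` on sets: for every class `i` and every measurable `S` with
`P_i(S) ≤ 1/2` one has `P_i(Nbhd S) ≥ min (b * P_i S) 1`, where `P_i(T) = P(T ∩ Q i)/P(Q i)`. -/
def MultiplicativeExpansion {X : Type*} [MeasurableSpace X] (P : Measure X)
    {K : ℕ} (Q : Fin K → Set X) (Nbhd : Set X → Set X) (b : ℝ) : Prop :=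
  ∀ i : Fin K, ∀ S : Set X, MeasurableSet S →
    (P (S ∩ Q i)).toReal / (P (Q i)).toReal ≤ 1 / 2 →
    (P (Nbhd S ∩ Q i)).toReal / (P (Q i)).toReal ≥
      min (b * ((P (S ∩ Q i)).toReal / (P (Q i)).toReal)) 1

/-- `P` satisfies `(c, ρ)`-constant expansion w.r.t. the class partition `Q` and the
restricted neighborhood operation `Nstar`: for every measurable `S` with `P S ≥ c` and
`P (S ∩ Q i) ≤ P (Q i) / 2` for all `i`, one has `P (Nstar S \ S) ≥ min ρ (P S)`. -/
def ConstantExpansion {X : Type*} [MeasurableSpace X] (P : Measure X)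
    {K : ℕ} (Q : Fin K → Set X) (Nstar : Set X → Set X) (c ρ : ℝ) : Prop :=
  ∀ S : Set X, MeasurableSet S → (P S).toReal ≥ c →
    (∀ i : Fin K, (P (S ∩ Q i)).toReal ≤ (P (Q i)).toReal / 2) →
    (P (Nstar S \ S)).toReal ≥ min ρ (P S).toReal

/-- If the probability measure `P` satisfies `(1/2, b)`-multiplicative expansion on `X` for
some `b > 1`, then for every `ρ > 0`, `P` satisfies `(ρ/(b-1), ρ)`-constant expansion. -/
theorem multiplicative_to_constant_expansion
    {X : Type*} [MeasurableSpace X] (P : Measure X) [IsProbabilityMeasure P]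
    (K : ℕ) (hK : 1 ≤ K)
    (Gstar : X → Fin K) (hGstar : Measurable Gstar)
    (Q : Fin K → Set X) (hQ : ∀ i, Q i = {x | Gstar x = i})
    (hQpos : ∀ i, 0 < P (Q i))
    (N : X → Set X) (hNmeas : ∀ x, MeasurableSet (N x))
    (Nbhd : Set X → Set X) (hNbhd : ∀ S : Set X, Nbhd S = ⋃ x ∈ S, N x)
    (Nstar : Set X → Set X)
    (hNstar : ∀ S : Set X, Nstar S = ⋃ i : Fin K, (Nbhd (S ∩ Q i) ∩ Q i))
    (hNbhdMeas : ∀ S : Set X, MeasurableSet S → MeasurableSet (Nbhd S))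
    (hNstarMeas : ∀ S : Set X, MeasurableSet S → MeasurableSet (Nstar S))
    (b : ℝ) (hb : 1 < b)
    (hexp : MultiplicativeExpansion P Q Nbhd b)
    (ρ : ℝ) (hρ : 0 < ρ) :
    ConstantExpansion P Q Nstar (ρ / (b - 1)) ρ := by

  intro S hS hSc hSi
  have hQmeas : ∀ i, MeasurableSet (Q i) := by
    intro i
    rw [hQ i]
    exact hGstar (MeasurableSet.singleton i)
  have hcpos : ∀ i, 0 < (P (Q i)).toReal := fun i =>
    ENNReal.toReal_pos (hQpos i).ne' (measure_ne_top P _)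
  have key : ∀ i, min (b * (P (S ∩ Q i)).toReal) (P (Q i)).toReal ≤
      (P (Nbhd (S ∩ Q i) ∩ Q i)).toReal := by
    intro i
    have hmeasSQ : MeasurableSet (S ∩ Q i) := hS.inter (hQmeas i)
    have hinter : (S ∩ Q i) ∩ Q i = S ∩ Q i := by rw [inter_assoc, inter_self]
    have hhalf : (P ((S ∩ Q i) ∩ Q i)).toReal / (P (Q i)).toReal ≤ 1 / 2 := by
      rw [hinter, div_le_iff₀ (hcpos i)]
      have := hSi i
      linarith
    have h := hexp i (S ∩ Q i) hmeasSQ hhalf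
    rw [hinter] at h
    have h2 : min (b * ((P (S ∩ Q i)).toReal / (P (Q i)).toReal)) 1 * (P (Q i)).toReal
        ≤ (P (Nbhd (S ∩ Q i) ∩ Q i)).toReal := by
      rw [← le_div_iff₀ (hcpos i)]
      exact h
    calc min (b * (P (S ∩ Q i)).toReal) (P (Q i)).toReal
        = min (b * ((P (S ∩ Q i)).toReal / (P (Q i)).toReal)) 1 * (P (Q i)).toReal := by
          rw [min_mul_of_nonneg _ _ (hcpos i).le, one_mul, mul_assoc,
            div_mul_cancel₀ _ (hcpos i).ne']
      _ ≤ _ := h2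
  have hcover : (⋃ i, Q i) = univ := by
    ext x
    simp only [mem_iUnion, mem_univ, iff_true]
    exact ⟨Gstar x, by rw [hQ]; exact rfl⟩
  have hdisj : Pairwise (Function.onFun Disjoint Q) := by
    intro i j hij
    rw [Function.onFun, hQ, hQ, Set.disjoint_left]
    intro x hx hx'
    exact hij ((Set.mem_setOf_eq ▸ hx).symm.trans hx')
  have hsplit : ∀ T : Set X, MeasurableSet T →
      (P T).toReal = ∑ i, (P (T ∩ Q i)).toReal := by
    intro T hT
    have hT' : T = ⋃ i, T ∩ Q i := by rw [← inter_iUnion, hcover, inter_univ]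
    calc (P T).toReal = (P (⋃ i, T ∩ Q i)).toReal := by rw [← hT']
      _ = (∑' i, P (T ∩ Q i)).toReal := by
          rw [measure_iUnion
            (fun i j hij => (hdisj hij).mono inter_subset_right inter_subset_right)
            (fun i => hT.inter (hQmeas i))]
      _ = ∑ i, (P (T ∩ Q i)).toReal := by
          rw [tsum_fintype]
          exact ENNReal.toReal_sum fun i _ => measure_ne_top P _
  have hsub : ∀ i, Nbhd (S ∩ Q i) ∩ Q i ⊆ ((Nstar S \ S) ∩ Q i) ∪ (S ∩ Q i) := by
    intro i x hx
    by_cases hxS : x ∈ S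
    · exact Or.inr ⟨hxS, hx.2⟩
    · refine Or.inl ⟨⟨?_, hxS⟩, hx.2⟩
      rw [hNstar]
      exact mem_iUnion.mpr ⟨i, hx⟩
  have hbound : ∀ i, min (b - 1) 1 * (P (S ∩ Q i)).toReal ≤
      (P ((Nstar S \ S) ∩ Q i)).toReal := by
    intro i
    have hmono : P (Nbhd (S ∩ Q i) ∩ Q i) ≤ P ((Nstar S \ S) ∩ Q i) + P (S ∩ Q i) :=
      le_trans (measure_mono (hsub i)) (measure_union_le _ _)
    have h1 : (P (Nbhd (S ∩ Q i) ∩ Q i)).toReal ≤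
        (P ((Nstar S \ S) ∩ Q i)).toReal + (P (S ∩ Q i)).toReal := by
      have := ENNReal.toReal_mono
        (ENNReal.add_ne_top.mpr ⟨measure_ne_top P _, measure_ne_top P _⟩) hmono
      rwa [ENNReal.toReal_add (measure_ne_top P _) (measure_ne_top P _)] at this
    have hk := key i
    have ha : (0:ℝ) ≤ (P (S ∩ Q i)).toReal := ENNReal.toReal_nonneg
    have hhalf := hSi i
    rcases le_total (b * (P (S ∩ Q i)).toReal) ((P (Q i)).toReal) with hmin | hmin
    · rw [min_eq_left hmin] at hk
      have hm : min (b - 1) 1 ≤ b - 1 := min_le_left _ _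
      nlinarith [mul_nonneg (sub_nonneg.mpr hm) ha]
    · rw [min_eq_right hmin] at hk
      have hm : min (b - 1) 1 ≤ 1 := min_le_right _ _
      nlinarith [mul_nonneg (sub_nonneg.mpr hm) ha]
  have hsum : min (b - 1) 1 * (P S).toReal ≤ (P (Nstar S \ S)).toReal := by
    rw [hsplit S hS, hsplit _ ((hNstarMeas S hS).diff hS), Finset.mul_sum]
    exact Finset.sum_le_sum fun i _ => hbound i
  have hPS : (0:ℝ) ≤ (P S).toReal := ENNReal.toReal_nonneg
  rcases le_total (b - 1) 1 with h | h
  · rw [min_eq_left h] at hsum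
    have hb1 : (0:ℝ) < b - 1 := by linarith
    have hρle : ρ ≤ (b - 1) * (P S).toReal := by
      rw [ge_iff_le, div_le_iff₀ hb1] at hSc
      nlinarith
    exact le_trans (min_le_left _ _) (le_trans hρle hsum)
  · rw [min_eq_right h, one_mul] at hsum
    exact le_trans (min_le_right _ _) hsum
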